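/- Let X ⊆ U, x₀ ∈ X, F : U → ℝᵖ with F(x) ∈ ℝᵖ₊₊ for all x ∈ X, f : U → ℝᵖ, and s := f(x₀)/F(x₀). Then x₀ is a weak Pareto efficient point of x ↦ f(x)/F(x) over X if and only if it is a weak Pareto efficient point of x ↦ f(x) − s * F(x) over X. -/

import Mathlib

open Filter Topology

/-- x₀ is a weak Pareto efficient point of φ over X: there is no x ∈ X with
φ(x) < φ(x₀) in every component. -/
def WeakParetoEff {Z : Type*} {p : ℕ} (X : Set Z) (φ : Z → (Fin p → ℝ)) (x₀ : Z) : Prop :=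
  ¬ ∃ x ∈ X, ∀ i, φ x i < φ x₀ i

theorem stmt9 {Z : Type*} [NormedAddCommGroup Z] [NormedSpace ℝ Z] {p : ℕ}
    (U X : Set Z) (hXU : X ⊆ U) (x₀ : Z) (hx₀ : x₀ ∈ X)
    (f F : Z → (Fin p → ℝ)) (hF : ∀ x ∈ U, ∀ i, 0 < F x i) :
    WeakParetoEff X (fun x i => f x i / F x i) x₀ ↔
      WeakParetoEff X (fun x i => f x i - (f x₀ i / F x₀ i) * F x i) x₀ := by
  unfold WeakParetoEff
  apply not_congr
  apply exists_congr
  intro x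
  apply and_congr_right
  intro hx
  apply forall_congr'
  intro i
  have hFx : 0 < F x i := hF x (hXU hx) i
  have hFx₀ : 0 < F x₀ i := hF x₀ (hXU hx₀) i
  have h0 : f x₀ i - f x₀ i / F x₀ i * F x₀ i = 0 := by
    field_simp
    ring
  simp only []
  rw [h0, sub_neg, div_lt_div_iff₀ hFx hFx₀]
  rw [div_mul_eq_mul_div, lt_div_iff₀ hFx₀, mul_comm (f x₀ i)]
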